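/- arXiv:2305.00966 — 4 statements merged into one kernel-verified Lean document; each statement's English description precedes it below -/
import Mathlib

section
/- Let μ ∈ ℝ^d, let Σ be a d×d positive semidefinite matrix, let ε ∈ (0,1), and let A be a finite nonempty set of points in ℝ^d satisfying conditions (L.1)–(L.2) with respect to (μ, Σ, ε). Then for every symmetric d×d matrix P and every subset A' ⊆ A with |A'| ≥ (1−ε)|A|: (i) ‖P·((1/|A'|)·Σ_{x∈A'} x − μ)‖₂ ≤ 0.1·√(‖P Σ P‖_op), and (ii) ‖P·((1/|A'|)·Σ_{x∈A'} (x−μ)(x−μ)ᵀ − Σ)·P‖_F ≤ 0.1·‖P Σ P‖_op. -/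
open Matrix MeasureTheory ProbabilityTheory

noncomputable section

namespace ListDecCov

/-- Frobenius norm of a square real matrix. -/
def frobNorm {d : ℕ} (M : Matrix (Fin d) (Fin d) ℝ) : ℝ :=
  Real.sqrt (∑ i, ∑ j, (M i j) ^ 2)

/-- Operator (spectral) norm of a square real matrix. -/
def opNorm {d : ℕ} (M : Matrix (Fin d) (Fin d) ℝ) : ℝ :=
  ‖Matrix.toEuclideanCLM (𝕜 := ℝ) M‖

/-- Euclidean (ℓ²) norm of a vector. -/
def vecNorm {d : ℕ} (v : Fin d → ℝ) : ℝ :=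
  Real.sqrt (∑ i, (v i) ^ 2)

/-- The four Penrose equations characterizing the Moore–Penrose pseudoinverse. -/
def IsMoorePenrose {d : ℕ} (H Hd : Matrix (Fin d) (Fin d) ℝ) : Prop :=
  H * Hd * H = H ∧ Hd * H * Hd = Hd ∧ (H * Hd)ᵀ = H * Hd ∧ (Hd * H)ᵀ = Hd * H

/-- Average of `f` over a finite set. -/
def fAvg {X V : Type*} [AddCommMonoid V] [Module ℝ V] (A : Finset X) (f : X → V) : V :=
  (A.card : ℝ)⁻¹ • ∑ x ∈ A, f x

/-- Average of `f` over a multiset. -/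
def msAvg {X V : Type*} [AddCommMonoid V] [Module ℝ V] (T : Multiset X) (f : X → V) : V :=
  (T.card : ℝ)⁻¹ • (T.map f).sum

/-- Empirical covariance matrix of `f x`, `x` ranging over a finite set. -/
def fCov {X : Type*} {d : ℕ} (A : Finset X) (f : X → (Fin d → ℝ)) :
    Matrix (Fin d) (Fin d) ℝ :=
  fAvg A (fun x => Matrix.vecMulVec (f x) (f x)) - Matrix.vecMulVec (fAvg A f) (fAvg A f)

/-- Empirical covariance matrix of `f x`, `x` ranging over a multiset. -/
def msCov {X : Type*} {d : ℕ} (T : Multiset X) (f : X → (Fin d → ℝ)) :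
    Matrix (Fin d) (Fin d) ℝ :=
  msAvg T (fun x => Matrix.vecMulVec (f x) (f x)) - Matrix.vecMulVec (msAvg T f) (msAvg T f)

/-- Empirical variance of `g x`, `x` ranging over a finite set. -/
def fVar {X : Type*} (A : Finset X) (g : X → ℝ) : ℝ :=
  fAvg A fun x => (g x - fAvg A g) ^ 2

/-- Empirical variance of `g x`, `x` ranging over a multiset. -/
def msVar {X : Type*} (T : Multiset X) (g : X → ℝ) : ℝ :=
  msAvg T fun x => (g x - msAvg T g) ^ 2

/-- The `k`-th smallest element (1-indexed) of a multiset of reals. -/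
def kthSmallest (s : Multiset ℝ) (k : ℕ) : ℝ :=
  (s.sort (· ≤ ·)).getD (k - 1) 0

/-- Median (the `⌈m/2⌉`-th smallest element) of a multiset of reals of size `m`. -/
def msMedian (s : Multiset ℝ) : ℝ :=
  kthSmallest s ((Multiset.card s + 1) / 2)

/-- Conditions (L.1)–(L.2) of stability, with respect to mean `μ`, covariance `Sig`
(with psd square root `sqrtSig`) and parameter `ε`. -/
def SatisfiesL12 {d : ℕ} (μ : Fin d → ℝ) (Sig sqrtSig : Matrix (Fin d) (Fin d) ℝ) (ε : ℝ)
    (A : Finset (Fin d → ℝ)) : Prop :=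
  ∀ A' ⊆ A, (1 - ε) * (A.card : ℝ) ≤ (A'.card : ℝ) →
    (∀ v : Fin d → ℝ,
        |fAvg A' (fun x => v ⬝ᵥ (x - μ))| ≤ 0.1 * Real.sqrt (v ⬝ᵥ Sig.mulVec v)) ∧
    (∀ U : Matrix (Fin d) (Fin d) ℝ, U.IsSymm →
        |Matrix.trace ((fAvg A' (fun x => Matrix.vecMulVec (x - μ) (x - μ)) - Sig) * U)|
          ≤ 0.1 * frobNorm (sqrtSig * U * sqrtSig))

/-- The positive semidefinite square root of a positive semidefinite matrix
(the definition of `Matrix.PosSemidef.sqrt` in the older Mathlib, since removed). -/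
def psdSqrt {d : ℕ} {Sig : Matrix (Fin d) (Fin d) ℝ} (hA : Sig.PosSemidef) :
    Matrix (Fin d) (Fin d) ℝ :=
  (hA.1.eigenvectorUnitary : Matrix (Fin d) (Fin d) ℝ) *
    Matrix.diagonal ((↑) ∘ Real.sqrt ∘ hA.1.eigenvalues) *
    (star hA.1.eigenvectorUnitary : Matrix (Fin d) (Fin d) ℝ)

end ListDecCov

namespace ListDecCov

section Helpers

open Matrix in
lemma psdSqrt_transpose {d : ℕ} {Sig : Matrix (Fin d) (Fin d) ℝ} (hSig : Sig.PosSemidef) :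
    (psdSqrt hSig)ᵀ = psdSqrt hSig := by
  rw [← Matrix.conjTranspose_eq_transpose_of_trivial]
  unfold psdSqrt
  rw [conjTranspose_mul, conjTranspose_mul, diagonal_conjTranspose,
    ← star_eq_conjTranspose, ← star_eq_conjTranspose, star_star, Matrix.mul_assoc]
  simp [Matrix.mul_assoc]

open Matrix in
lemma psdSqrt_mul_self {d : ℕ} {Sig : Matrix (Fin d) (Fin d) ℝ} (hSig : Sig.PosSemidef) :
    psdSqrt hSig * psdSqrt hSig = Sig := by
  conv_rhs => rw [hSig.1.spectral_theorem, Unitary.conjStarAlgAut_apply]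
  simp only [psdSqrt, Matrix.mul_assoc]
  rw [← Matrix.mul_assoc (↑(star _) : Matrix (Fin d) (Fin d) ℝ),
    Unitary.coe_star_mul_self, Matrix.one_mul, ← Matrix.mul_assoc (diagonal _), diagonal_mul_diagonal]
  congr 2
  congr 1
  funext i
  simp [Real.mul_self_sqrt (hSig.eigenvalues_nonneg i)]


set_option synthInstance.maxHeartbeats 1000000 in
set_option maxHeartbeats 1000000 in
lemma opNorm_transpose {d : ℕ} (M : Matrix (Fin d) (Fin d) ℝ) : opNorm Mᵀ = opNorm M := by
  unfold opNorm
  rw [← Matrix.conjTranspose_eq_transpose_of_trivial, ← Matrix.star_eq_conjTranspose,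
    map_star, ContinuousLinearMap.star_eq_adjoint]
  exact ContinuousLinearMap.adjoint.norm_map _

set_option synthInstance.maxHeartbeats 1000000 in
set_option maxHeartbeats 1000000 in
lemma opNorm_transpose_mul_self {d : ℕ} (M : Matrix (Fin d) (Fin d) ℝ) :
    opNorm (Mᵀ * M) = opNorm M ^ 2 := by
  unfold opNorm
  rw [← Matrix.conjTranspose_eq_transpose_of_trivial, ← Matrix.star_eq_conjTranspose,
    _root_.map_mul, map_star, ContinuousLinearMap.star_eq_adjoint,
    ContinuousLinearMap.mul_def, ContinuousLinearMap.norm_adjoint_comp_self, sq]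

variable {d : ℕ}

lemma vecNorm_nonneg (v : Fin d → ℝ) : 0 ≤ vecNorm v := Real.sqrt_nonneg _
lemma opNorm_nonneg (M : Matrix (Fin d) (Fin d) ℝ) : 0 ≤ opNorm M := norm_nonneg _
lemma frobNorm_nonneg (M : Matrix (Fin d) (Fin d) ℝ) : 0 ≤ frobNorm M := Real.sqrt_nonneg _

lemma vecNorm_sq (v : Fin d → ℝ) : vecNorm v ^ 2 = ∑ i, (v i) ^ 2 :=
  Real.sq_sqrt (Finset.sum_nonneg fun _ _ => sq_nonneg _)

lemma frobNorm_sq (M : Matrix (Fin d) (Fin d) ℝ) : frobNorm M ^ 2 = ∑ i, ∑ j, (M i j) ^ 2 :=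
  Real.sq_sqrt (Finset.sum_nonneg fun _ _ => Finset.sum_nonneg fun _ _ => sq_nonneg _)

lemma vecNorm_eq_norm (v : Fin d → ℝ) :
    vecNorm v = ‖(WithLp.equiv 2 (Fin d → ℝ)).symm v‖ := by
  rw [EuclideanSpace.norm_eq]
  simp [vecNorm, sq_abs]

lemma vecNorm_mulVec_le (M : Matrix (Fin d) (Fin d) ℝ) (v : Fin d → ℝ) :
    vecNorm (M.mulVec v) ≤ opNorm M * vecNorm v := by
  rw [vecNorm_eq_norm, vecNorm_eq_norm]
  have h := (Matrix.toEuclideanCLM (𝕜 := ℝ) M).le_opNorm ((WithLp.equiv 2 (Fin d → ℝ)).symm v)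
  exact h

lemma abs_dot_le (u v : Fin d → ℝ) : |u ⬝ᵥ v| ≤ vecNorm u * vecNorm v := by
  have h := abs_real_inner_le_norm ((WithLp.equiv 2 (Fin d → ℝ)).symm u)
    ((WithLp.equiv 2 (Fin d → ℝ)).symm v)
  rw [PiLp.inner_apply] at h
  simpa [dotProduct, vecNorm_eq_norm, mul_comm] using h

lemma frobNorm_transpose (M : Matrix (Fin d) (Fin d) ℝ) : frobNorm Mᵀ = frobNorm M := by
  unfold frobNorm
  congr 1
  exact Finset.sum_comm

lemma frobNorm_mul_le_left (A B : Matrix (Fin d) (Fin d) ℝ) :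
    frobNorm (A * B) ≤ opNorm A * frobNorm B := by
  have key : ∑ i, ∑ j, ((A * B) i j) ^ 2 ≤ (opNorm A) ^ 2 * ∑ i, ∑ j, (B i j) ^ 2 := by
    rw [Finset.sum_comm, Finset.sum_comm (f := fun i j => (B i j) ^ 2), Finset.mul_sum]
    refine Finset.sum_le_sum fun j _ => ?_
    have hcol : ∀ i, (A * B) i j = (A.mulVec fun k => B k j) i := by
      intro i; simp [Matrix.mul_apply, Matrix.mulVec, dotProduct]
    have h1 := vecNorm_mulVec_le A (fun k => B k j)
    have h2 : vecNorm (A.mulVec fun k => B k j) ^ 2 ≤ (opNorm A * vecNorm fun k => B k j) ^ 2 :=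
      pow_le_pow_left₀ (vecNorm_nonneg _) h1 2
    rw [vecNorm_sq] at h2
    calc ∑ i, ((A * B) i j) ^ 2 = ∑ i, ((A.mulVec fun k => B k j) i) ^ 2 := by
          simp_rw [hcol]
      _ ≤ (opNorm A * vecNorm fun k => B k j) ^ 2 := h2
      _ = opNorm A ^ 2 * ∑ i, (B i j) ^ 2 := by rw [mul_pow, vecNorm_sq]
  calc frobNorm (A * B) = Real.sqrt (∑ i, ∑ j, ((A * B) i j) ^ 2) := rfl
    _ ≤ Real.sqrt ((opNorm A) ^ 2 * ∑ i, ∑ j, (B i j) ^ 2) := Real.sqrt_le_sqrt key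
    _ = opNorm A * frobNorm B := by
        rw [Real.sqrt_mul (sq_nonneg _), Real.sqrt_sq (opNorm_nonneg _)]; rfl

lemma frobNorm_mul_le_right (A B : Matrix (Fin d) (Fin d) ℝ) :
    frobNorm (A * B) ≤ frobNorm A * opNorm B := by
  calc frobNorm (A * B) = frobNorm (A * B)ᵀ := (frobNorm_transpose _).symm
    _ = frobNorm (Bᵀ * Aᵀ) := by rw [Matrix.transpose_mul]
    _ ≤ opNorm Bᵀ * frobNorm Aᵀ := frobNorm_mul_le_left _ _
    _ = frobNorm A * opNorm B := by rw [opNorm_transpose, frobNorm_transpose, mul_comm]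

lemma mulVec_dot_symm (P : Matrix (Fin d) (Fin d) ℝ) (hP : P.IsSymm) (u w : Fin d → ℝ) :
    P.mulVec u ⬝ᵥ w = u ⬝ᵥ P.mulVec w := by
  rw [Matrix.dotProduct_mulVec u P w]
  congr 1
  rw [← Matrix.vecMul_transpose, hP.eq]

lemma trace_transpose_mul_self (N : Matrix (Fin d) (Fin d) ℝ) :
    Matrix.trace (Nᵀ * N) = ∑ i, ∑ j, (N i j) ^ 2 := by
  simp only [Matrix.trace, Matrix.diag, Matrix.mul_apply, Matrix.transpose_apply, sq]
  exact Finset.sum_comm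

lemma dot_mulVec_le_opNorm (M : Matrix (Fin d) (Fin d) ℝ) (v : Fin d → ℝ) :
    v ⬝ᵥ M.mulVec v ≤ opNorm M * vecNorm v ^ 2 := by
  calc v ⬝ᵥ M.mulVec v ≤ |v ⬝ᵥ M.mulVec v| := le_abs_self _
    _ ≤ vecNorm v * vecNorm (M.mulVec v) := abs_dot_le _ _
    _ ≤ vecNorm v * (opNorm M * vecNorm v) :=
        mul_le_mul_of_nonneg_left (vecNorm_mulVec_le M v) (vecNorm_nonneg v)
    _ = opNorm M * vecNorm v ^ 2 := by ring

lemma vecNorm_smul (c : ℝ) (v : Fin d → ℝ) : vecNorm (c • v) = |c| * vecNorm v := by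
  unfold vecNorm
  rw [← Real.sqrt_sq_eq_abs, ← Real.sqrt_mul (sq_nonneg c)]
  congr 1
  simp [mul_pow, Finset.mul_sum]

lemma dot_self_eq (v : Fin d → ℝ) : v ⬝ᵥ v = vecNorm v ^ 2 := by
  rw [vecNorm_sq]; simp [dotProduct, sq]

lemma vecNorm_pos {v : Fin d → ℝ} (h : v ≠ 0) : 0 < vecNorm v := by
  rw [vecNorm, Real.sqrt_pos]
  obtain ⟨i, hi⟩ := Function.ne_iff.mp h
  have hi' : v i ≠ 0 := by simpa using hi
  have h0 : 0 < v i ^ 2 := by positivity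
  exact lt_of_lt_of_le h0
    (Finset.single_le_sum (f := fun j => v j ^ 2) (fun j _ => sq_nonneg _) (Finset.mem_univ i))

lemma dot_sum {X : Type*} (v : Fin d → ℝ) (s : Finset X) (g : X → Fin d → ℝ) :
    v ⬝ᵥ (∑ x ∈ s, g x) = ∑ x ∈ s, v ⬝ᵥ g x := by
  simp only [dotProduct, Finset.sum_apply, Finset.mul_sum]
  exact Finset.sum_comm

lemma fAvg_dot (v : Fin d → ℝ) (A' : Finset (Fin d → ℝ)) (g : (Fin d → ℝ) → Fin d → ℝ) :
    fAvg A' (fun x => v ⬝ᵥ g x) = v ⬝ᵥ fAvg A' g := by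
  unfold fAvg
  rw [dotProduct_smul, dot_sum]

lemma fAvg_sub_const (A' : Finset (Fin d → ℝ)) (h : (A'.card : ℝ) ≠ 0) (μ : Fin d → ℝ) :
    fAvg A' (fun x => x - μ) = fAvg A' id - μ := by
  unfold fAvg
  rw [Finset.sum_sub_distrib, smul_sub, Finset.sum_const]
  congr 1
  rw [← Nat.cast_smul_eq_nsmul ℝ, smul_smul, inv_mul_cancel₀ h, one_smul]

lemma fAvg_isSymm {X : Type*} (A' : Finset X) (g : X → Matrix (Fin d) (Fin d) ℝ)
    (hg : ∀ x, (g x)ᵀ = g x) : (fAvg A' g)ᵀ = fAvg A' g := by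
  unfold fAvg
  rw [Matrix.transpose_smul, Matrix.transpose_sum]
  simp_rw [hg]

lemma vecMulVec_self_transpose (a : Fin d → ℝ) :
    (Matrix.vecMulVec a a)ᵀ = Matrix.vecMulVec a a := by
  ext i j; simp [Matrix.vecMulVec_apply, mul_comm]

end Helpers


/-- consequences of the stability conditions (L.1)–(L.2) after a symmetric
transformation `P`. -/
theorem statement2 (d : ℕ) (μ : Fin d → ℝ)
    (Sig : Matrix (Fin d) (Fin d) ℝ) (hSig : Sig.PosSemidef)
    (ε : ℝ) (hε : ε ∈ Set.Ioo (0 : ℝ) 1)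
    (A : Finset (Fin d → ℝ)) (hA : A.Nonempty)
    (hstab : SatisfiesL12 μ Sig (psdSqrt hSig) ε A)
    (P : Matrix (Fin d) (Fin d) ℝ) (hP : P.IsSymm)
    (A' : Finset (Fin d → ℝ)) (hsub : A' ⊆ A)
    (hcard : (1 - ε) * (A.card : ℝ) ≤ (A'.card : ℝ)) :
    vecNorm (P.mulVec (fAvg A' id - μ)) ≤ 0.1 * Real.sqrt (opNorm (P * Sig * P)) ∧
    frobNorm (P * (fAvg A' (fun x => Matrix.vecMulVec (x - μ) (x - μ)) - Sig) * P) ≤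
      0.1 * opNorm (P * Sig * P) := by
  obtain ⟨hstab1, hstab2⟩ := hstab A' hsub hcard
  have hApos : (0 : ℝ) < A.card := by exact_mod_cast Finset.card_pos.mpr hA
  have hA'pos : (0 : ℝ) < A'.card := by nlinarith [hε.2]
  have hne : (A'.card : ℝ) ≠ 0 := ne_of_gt hA'pos
  set S := psdSqrt hSig with hS
  have hSsymm : Sᵀ = S := by
    exact psdSqrt_transpose hSig
  have hSS : S * S = Sig := psdSqrt_mul_self hSig
  have hSigsymm : Sigᵀ = Sig := by
    rw [← Matrix.conjTranspose_eq_transpose_of_trivial]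
    exact hSig.1
  constructor
  · -- part (i)
    set w := fAvg A' id - μ with hw
    by_cases hPw : P.mulVec w = 0
    · rw [hPw]
      have h1 : vecNorm (0 : Fin d → ℝ) = 0 := by simp [vecNorm]
      rw [h1]
      positivity
    · set c := vecNorm (P.mulVec w) with hc
      have hcpos : 0 < c := vecNorm_pos hPw
      set u := c⁻¹ • P.mulVec w with hu
      have hunorm : vecNorm u = 1 := by
        rw [hu, vecNorm_smul, abs_inv, abs_of_pos hcpos, ← hc, inv_mul_cancel₀ (ne_of_gt hcpos)]
      have h1 := hstab1 (P.mulVec u)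
      have havg : fAvg A' (fun x => P.mulVec u ⬝ᵥ (x - μ)) = P.mulVec u ⬝ᵥ w := by
        rw [fAvg_dot, fAvg_sub_const A' hne]
      rw [havg] at h1
      have hdot : P.mulVec u ⬝ᵥ w = c := by
        rw [mulVec_dot_symm P hP, hu, smul_dotProduct, dot_self_eq, ← hc, smul_eq_mul]
        field_simp
      rw [hdot, abs_of_pos hcpos] at h1
      have hquad : P.mulVec u ⬝ᵥ Sig.mulVec (P.mulVec u) ≤ opNorm (P * Sig * P) := by
        have e1 : P.mulVec u ⬝ᵥ Sig.mulVec (P.mulVec u) = u ⬝ᵥ (P * Sig * P).mulVec u := by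
          rw [mulVec_dot_symm P hP u, Matrix.mulVec_mulVec, Matrix.mulVec_mulVec]
        rw [e1]
        calc u ⬝ᵥ (P * Sig * P).mulVec u ≤ opNorm (P * Sig * P) * vecNorm u ^ 2 :=
              dot_mulVec_le_opNorm _ _
          _ = opNorm (P * Sig * P) := by rw [hunorm]; ring
      calc c ≤ 0.1 * Real.sqrt (P.mulVec u ⬝ᵥ Sig.mulVec (P.mulVec u)) := h1
        _ ≤ 0.1 * Real.sqrt (opNorm (P * Sig * P)) := by
            have := Real.sqrt_le_sqrt hquad
            nlinarith
  · -- part (ii)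
    set M0 := fAvg A' (fun x => Matrix.vecMulVec (x - μ) (x - μ)) - Sig with hM0
    have hM0symm : M0ᵀ = M0 := by
      rw [hM0, Matrix.transpose_sub, hSigsymm,
        fAvg_isSymm A' _ (fun x => vecMulVec_self_transpose (x - μ))]
    set N := P * M0 * P with hN
    have hNsymm : Nᵀ = N := by
      rw [hN, Matrix.transpose_mul, Matrix.transpose_mul, hP.eq, hM0symm, ← mul_assoc]
    by_cases hfn : frobNorm N = 0
    · rw [hfn]
      have := opNorm_nonneg (P * Sig * P)
      linarith
    · have hfnpos : 0 < frobNorm N := lt_of_le_of_ne (frobNorm_nonneg N) (Ne.symm hfn)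
      have hUsymm : (P * N * P).IsSymm := by
        show (P * N * P)ᵀ = P * N * P
        rw [Matrix.transpose_mul, Matrix.transpose_mul, hP.eq, hNsymm, ← mul_assoc]
      have h2 := hstab2 (P * N * P) hUsymm
      have htr : Matrix.trace (M0 * (P * N * P)) = frobNorm N ^ 2 := by
        have e : M0 * (P * N * P) = (M0 * P) * N * P := by
          simp only [mul_assoc]
        rw [e, Matrix.trace_mul_cycle (M0 * P) N P]
        have e2 : P * (M0 * P) = N := by rw [hN, mul_assoc]
        rw [show P * (M0 * P) * N = N * N by rw [e2]]
        nth_rewrite 1 [← hNsymm]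
        rw [trace_transpose_mul_self, ← frobNorm_sq]
      rw [htr, abs_of_nonneg (sq_nonneg _)] at h2
      have hb : frobNorm (S * (P * N * P) * S) ≤ opNorm (P * Sig * P) * frobNorm N := by
        have e1 : S * (P * N * P) * S = (S * P) * (N * (S * P)ᵀ) := by
          rw [Matrix.transpose_mul, hSsymm, hP.eq]
          simp only [mul_assoc]
        have e2 : (S * P)ᵀ * (S * P) = P * Sig * P := by
          rw [Matrix.transpose_mul, hSsymm, hP.eq, ← hSS]
          simp only [mul_assoc]
        calc frobNorm (S * (P * N * P) * S) = frobNorm ((S * P) * (N * (S * P)ᵀ)) := by rw [e1]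
          _ ≤ opNorm (S * P) * frobNorm (N * (S * P)ᵀ) := frobNorm_mul_le_left _ _
          _ ≤ opNorm (S * P) * (frobNorm N * opNorm (S * P)ᵀ) :=
              mul_le_mul_of_nonneg_left (frobNorm_mul_le_right _ _) (opNorm_nonneg _)
          _ = opNorm (S * P) ^ 2 * frobNorm N := by rw [opNorm_transpose]; ring
          _ = opNorm ((S * P)ᵀ * (S * P)) * frobNorm N := by rw [opNorm_transpose_mul_self]
          _ = opNorm (P * Sig * P) * frobNorm N := by rw [e2]
      have hfinal : frobNorm N ^ 2 ≤ 0.1 * (opNorm (P * Sig * P) * frobNorm N) := by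
        calc frobNorm N ^ 2 ≤ 0.1 * frobNorm (S * (P * N * P) * S) := h2
          _ ≤ 0.1 * (opNorm (P * Sig * P) * frobNorm N) := by nlinarith
      nlinarith


end ListDecCov
end
end

section
/- Let α ∈ (0,1], let T be a finite nonempty multiset of points in ℝ^d, let H = E_{x∼T}[x xᵀ], and let T' be a sub-multiset of T with |T'| ≥ (α/2)·|T|. Then the points x̃ = H^{†/2} x for x ∈ T' satisfy: (i) ‖Cov_{x∼T'}[H^{†/2} x]‖_op ≤ 2/α, and (ii) ‖E_{x∼T'}[H^{†/2} x]‖₂ ≤ √(2/α). -/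
open Matrix MeasureTheory ProbabilityTheory

noncomputable section

namespace ListDecCov

variable {d : ℕ}

private def qfL (v : Fin d → ℝ) : Matrix (Fin d) (Fin d) ℝ →ₗ[ℝ] ℝ where
  toFun A := v ⬝ᵥ A.mulVec v
  map_add' A B := by simp [Matrix.add_mulVec, dotProduct_add]
  map_smul' c A := by simp [Matrix.smul_mulVec, dotProduct_smul]

@[simp] private lemma qfL_apply (v : Fin d → ℝ) (A : Matrix (Fin d) (Fin d) ℝ) :
    qfL v A = v ⬝ᵥ A.mulVec v := rfl

private def dotL (v : Fin d → ℝ) : (Fin d → ℝ) →ₗ[ℝ] ℝ where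
  toFun w := v ⬝ᵥ w
  map_add' a b := by simp [dotProduct_add]
  map_smul' c a := by simp [dotProduct_smul]

@[simp] private lemma dotL_apply (v w : Fin d → ℝ) : dotL v w = v ⬝ᵥ w := rfl

private def trL : Matrix (Fin d) (Fin d) ℝ →ₗ[ℝ] Matrix (Fin d) (Fin d) ℝ where
  toFun := Matrix.transpose
  map_add' := Matrix.transpose_add
  map_smul' c A := by simp

private lemma msAvg_linear {X V W : Type*} [AddCommMonoid V] [Module ℝ V] [AddCommMonoid W]
    [Module ℝ W] (L : V →ₗ[ℝ] W) (s : Multiset X) (F : X → V) :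
    L (msAvg s F) = msAvg s (fun x => L (F x)) := by
  simp only [msAvg, _root_.map_smul, map_multiset_sum, Multiset.map_map, Function.comp]

private lemma qf_vecMulVec (a v : Fin d → ℝ) :
    v ⬝ᵥ (Matrix.vecMulVec a a).mulVec v = (v ⬝ᵥ a) ^ 2 := by
  rw [show (v ⬝ᵥ a)^2 = (v ⬝ᵥ a) * (a ⬝ᵥ v) by rw [dotProduct_comm]; ring]
  simp only [Matrix.mulVec, Matrix.vecMulVec_apply, dotProduct, Finset.sum_mul, Finset.mul_sum]
  congr 1; ext i; congr 1; ext j; ring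

private lemma qf_msAvg {X : Type*} (s : Multiset X) (F : X → Matrix (Fin d) (Fin d) ℝ)
    (v : Fin d → ℝ) :
    v ⬝ᵥ (msAvg s F).mulVec v
      = (Multiset.card s : ℝ)⁻¹ * (s.map (fun x => v ⬝ᵥ (F x).mulVec v)).sum := by
  have h := msAvg_linear (qfL v) s F
  simpa only [qfL_apply, msAvg, smul_eq_mul] using h

private lemma dot_msAvg {X : Type*} (s : Multiset X) (f : X → (Fin d → ℝ)) (v : Fin d → ℝ) :
    v ⬝ᵥ msAvg s f = (Multiset.card s : ℝ)⁻¹ * (s.map (fun x => v ⬝ᵥ f x)).sum := by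
  have h := msAvg_linear (dotL v) s f
  simpa only [dotL_apply, msAvg, smul_eq_mul] using h

private lemma msAvg_transpose {X : Type*} (s : Multiset X)
    (F : X → Matrix (Fin d) (Fin d) ℝ) :
    (msAvg s F)ᵀ = msAvg s (fun x => (F x)ᵀ) :=
  msAvg_linear trL s F

private lemma vecMulVec_transpose' (a b : Fin d → ℝ) :
    (Matrix.vecMulVec a b)ᵀ = Matrix.vecMulVec b a := by
  ext i j; simp [Matrix.vecMulVec_apply, mul_comm]

private lemma dot_self_nonneg' (u : Fin d → ℝ) : 0 ≤ u ⬝ᵥ u := by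
  simp only [dotProduct, ← sq]; positivity

private lemma sub_dot_self (B : Matrix (Fin d) (Fin d) ℝ) (hBt : Bᵀ = B) (hBB : B * B = B)
    (v : Fin d → ℝ) : 0 ≤ v ⬝ᵥ B.mulVec v ∧ v ⬝ᵥ B.mulVec v ≤ v ⬝ᵥ v := by
  have hsym : ∀ u w : Fin d → ℝ, (B.mulVec u) ⬝ᵥ w = u ⬝ᵥ B.mulVec w := by
    intro u w
    rw [Matrix.dotProduct_mulVec, ← Matrix.mulVec_transpose, hBt]
  have e1 : (B.mulVec v) ⬝ᵥ (B.mulVec v) = v ⬝ᵥ B.mulVec v := by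
    rw [hsym, Matrix.mulVec_mulVec, hBB]
  have h0 : 0 ≤ (B.mulVec v) ⬝ᵥ (B.mulVec v) := dot_self_nonneg' _
  have h2 : 0 ≤ (v - B.mulVec v) ⬝ᵥ (v - B.mulVec v) := dot_self_nonneg' _
  have h3 : (B.mulVec v) ⬝ᵥ v = v ⬝ᵥ B.mulVec v := dotProduct_comm _ _
  rw [sub_dotProduct, dotProduct_sub, dotProduct_sub, e1, h3] at h2
  constructor <;> linarith

private lemma opNorm_le_of_qf {A : Matrix (Fin d) (Fin d) ℝ} (hA : A.PosSemidef)
    {c : ℝ} (hc : 0 ≤ c) (h : ∀ v : Fin d → ℝ, v ⬝ᵥ A.mulVec v ≤ c * (v ⬝ᵥ v)) :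
    opNorm A ≤ c := by
  have hAt : Aᵀ = A := by
    rw [← Matrix.conjTranspose_eq_transpose_of_trivial]; exact hA.1
  have hsym : ∀ u w : Fin d → ℝ, (A.mulVec u) ⬝ᵥ w = u ⬝ᵥ A.mulVec w := by
    intro u w
    rw [Matrix.dotProduct_mulVec, ← Matrix.mulVec_transpose, hAt]
  obtain ⟨S, hSpsd, hSS⟩ : ∃ S : Matrix (Fin d) (Fin d) ℝ, S.PosSemidef ∧ S * S = A :=
    open scoped MatrixOrder in ⟨CFC.sqrt A, (CFC.sqrt_nonneg A).posSemidef, CFC.sqrt_mul_sqrt_self A hA.nonneg⟩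
  have hSt : Sᵀ = S := by
    rw [← Matrix.conjTranspose_eq_transpose_of_trivial]; exact hSpsd.1
  have hsymS : ∀ u w : Fin d → ℝ, (S.mulVec u) ⬝ᵥ w = u ⬝ᵥ S.mulVec w := by
    intro u w
    rw [Matrix.dotProduct_mulVec, ← Matrix.mulVec_transpose, hSt]
  have key : ∀ v : Fin d → ℝ, (A.mulVec v) ⬝ᵥ (A.mulVec v) ≤ c^2 * (v ⬝ᵥ v) := by
    intro v
    have e1 : (A.mulVec v) ⬝ᵥ (A.mulVec v) = (S.mulVec v) ⬝ᵥ A.mulVec (S.mulVec v) := by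
      rw [hsym, hsymS]
      simp only [Matrix.mulVec_mulVec]
      rw [← hSS]
      congr 1
      simp only [mul_assoc]
    have e2 : (S.mulVec v) ⬝ᵥ (S.mulVec v) = v ⬝ᵥ A.mulVec v := by
      rw [hsymS, Matrix.mulVec_mulVec, hSS]
    have h1 := h (S.mulVec v)
    rw [e2] at h1
    have h2 := h v
    have hq : 0 ≤ v ⬝ᵥ A.mulVec v := by
      have := hA.dotProduct_mulVec_nonneg v
      simpa using this
    nlinarith [e1]
  rw [opNorm]
  apply ContinuousLinearMap.opNorm_le_bound _ hc
  intro x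
  set v : Fin d → ℝ := (WithLp.equiv 2 _) x with hv
  have hx : x = (WithLp.equiv 2 _).symm v := by simp [hv]
  rw [hx, show (Matrix.toEuclideanCLM (𝕜 := ℝ) A) ((WithLp.equiv 2 _).symm v)
      = (WithLp.equiv 2 _).symm (Matrix.toLin' A v) from rfl]
  rw [EuclideanSpace.norm_eq, EuclideanSpace.norm_eq]
  have hentry : ∀ i, ((WithLp.equiv 2 _).symm (Matrix.toLin' A v) : EuclideanSpace ℝ (Fin d)) i
      = A.mulVec v i := by
    intro i; rw [Matrix.toLin'_apply]; rfl
  have hentry2 : ∀ i, ((WithLp.equiv 2 _).symm v : EuclideanSpace ℝ (Fin d)) i = v i := by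
    intro i; rfl
  simp only [hentry, hentry2, Real.norm_eq_abs, sq_abs]
  have hle : ∑ i, (A.mulVec v i)^2 ≤ c^2 * ∑ i, (v i)^2 := by
    have := key v
    simpa [dotProduct, sq, Finset.mul_sum] using this
  calc Real.sqrt (∑ i, (A.mulVec v i)^2) ≤ Real.sqrt (c^2 * ∑ i, (v i)^2) :=
        Real.sqrt_le_sqrt hle
    _ = c * Real.sqrt (∑ i, (v i)^2) := by
        rw [Real.sqrt_mul (sq_nonneg c), Real.sqrt_sq hc]

private lemma sum_sq_sub {X : Type*} (s : Multiset X) (g : X → ℝ) (m : ℝ) :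
    (s.map (fun x => (g x - m) ^ 2)).sum
      = (s.map (fun x => g x ^ 2)).sum - 2 * m * (s.map g).sum
        + (Multiset.card s : ℝ) * m ^ 2 := by
  induction s using Multiset.induction with
  | empty => simp
  | cons a s ih =>
    simp only [Multiset.map_cons, Multiset.sum_cons, ih, Multiset.card_cons, Nat.cast_add,
      Nat.cast_one]
    ring

private lemma sum_map_le {X : Type*} {s t : Multiset X} (h : s ≤ t) (g : X → ℝ)
    (hg : ∀ x, 0 ≤ g x) : (s.map g).sum ≤ (t.map g).sum := by
  obtain ⟨u, rfl⟩ := Multiset.le_iff_exists_add.mp h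
  rw [Multiset.map_add, Multiset.sum_add]
  have : 0 ≤ (u.map g).sum := by
    apply Multiset.sum_nonneg
    intro x hx
    obtain ⟨y, _, rfl⟩ := Multiset.mem_map.mp hx
    exact hg y
  linarith

end ListDecCov

namespace ListDecCov

/-- after normalizing by `H^{†/2}` with `H = E_{x∼T}[x xᵀ]`, any sub-multiset
`T'` of `T` with `|T'| ≥ (α/2)|T|` has bounded empirical covariance and mean.
Here `W` plays the role of `H^{†/2}`: it is PSD and `W W` is the Moore–Penrose
pseudoinverse of `H`. -/
theorem statement4 (d : ℕ) (α : ℝ) (hα : α ∈ Set.Ioc (0 : ℝ) 1)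
    (T : Multiset (Fin d → ℝ)) (hT : T ≠ 0)
    (T' : Multiset (Fin d → ℝ)) (hsub : T' ≤ T)
    (hcard : (α / 2) * (Multiset.card T : ℝ) ≤ (Multiset.card T' : ℝ))
    (W : Matrix (Fin d) (Fin d) ℝ) (hW : W.PosSemidef)
    (hMP : IsMoorePenrose (msAvg T fun x => Matrix.vecMulVec x x) (W * W)) :
    opNorm (msCov T' (fun x => W.mulVec x)) ≤ 2 / α ∧
    vecNorm (msAvg T' (fun x => W.mulVec x)) ≤ Real.sqrt (2 / α) := by
  obtain ⟨hα0, hα1⟩ := hα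
  have hWt : Wᵀ = W := by
    rw [← Matrix.conjTranspose_eq_transpose_of_trivial]; exact hW.1
  have hsymW : ∀ u w : Fin d → ℝ, (W.mulVec u) ⬝ᵥ w = u ⬝ᵥ W.mulVec w := by
    intro u w
    rw [Matrix.dotProduct_mulVec, ← Matrix.mulVec_transpose, hWt]
  have hHt : (msAvg T fun x => Matrix.vecMulVec x x)ᵀ = (msAvg T fun x => Matrix.vecMulVec x x) := by
    rw [msAvg_transpose]
    simp only [vecMulVec_transpose']
  set H : Matrix (Fin d) (Fin d) ℝ := msAvg T fun x => Matrix.vecMulVec x x with hHdef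
  have hPt : (W * H * W)ᵀ = W * H * W := by
    rw [Matrix.transpose_mul, Matrix.transpose_mul, hWt, hHt]
    simp only [mul_assoc]
  have hPP : (W * H * W) * (W * H * W) = W * H * W := by
    have h1 : H * (W * W) * H = H := hMP.1
    have h2 : (W * H * W) * (W * H * W) = W * (H * (W * W) * H) * W := by
      simp only [mul_assoc]
    rw [h2, h1]
  -- cardinalities
  have hn : (0:ℝ) < (Multiset.card T : ℝ) := by
    exact_mod_cast Multiset.card_pos.mpr hT
  have hn' : (0:ℝ) < (Multiset.card T' : ℝ) := lt_of_lt_of_le (by nlinarith) hcard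
  have hratio : (Multiset.card T : ℝ) / (Multiset.card T' : ℝ) ≤ 2 / α := by
    rw [div_le_div_iff₀ hn' hα0]; nlinarith
  have hqP := fun v => sub_dot_self (W * H * W) hPt hPP v
  have hPeq : ∀ v : Fin d → ℝ, v ⬝ᵥ (W * H * W).mulVec v
      = (Multiset.card T : ℝ)⁻¹ * (T.map (fun x => (v ⬝ᵥ W.mulVec x) ^ 2)).sum := by
    intro v
    have e1 : (W * H * W).mulVec v = W.mulVec (H.mulVec (W.mulVec v)) := by
      rw [← Matrix.mulVec_mulVec, ← Matrix.mulVec_mulVec]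
    rw [e1, ← hsymW, hHdef, qf_msAvg]
    congr 1
    apply congrArg Multiset.sum
    apply Multiset.map_congr rfl
    intro x _
    rw [qf_vecMulVec, hsymW]
  -- the key quadratic bound
  have keyM : ∀ v : Fin d → ℝ,
      v ⬝ᵥ (msAvg T' fun x => Matrix.vecMulVec (W.mulVec x) (W.mulVec x)).mulVec v
        ≤ 2 / α * (v ⬝ᵥ v) := by
    intro v
    rw [qf_msAvg]
    have e2 : (T'.map (fun x => v ⬝ᵥ (Matrix.vecMulVec (W.mulVec x) (W.mulVec x)).mulVec v))
        = T'.map (fun x => (v ⬝ᵥ W.mulVec x) ^ 2) := by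
      apply Multiset.map_congr rfl
      intro x _
      rw [qf_vecMulVec]
    rw [e2]
    have hmono : (T'.map (fun x => (v ⬝ᵥ W.mulVec x) ^ 2)).sum
        ≤ (T.map (fun x => (v ⬝ᵥ W.mulVec x) ^ 2)).sum :=
      sum_map_le hsub _ (fun x => sq_nonneg _)
    have hTsum : (T.map (fun x => (v ⬝ᵥ W.mulVec x) ^ 2)).sum
        = (Multiset.card T : ℝ) * (v ⬝ᵥ (W * H * W).mulVec v) := by
      rw [hPeq v]
      field_simp
    obtain ⟨hq0, hq1⟩ := hqP v
    have hvv := dot_self_nonneg' v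
    have h1 : ((Multiset.card T' : ℝ))⁻¹ * (T'.map (fun x => (v ⬝ᵥ W.mulVec x) ^ 2)).sum
        ≤ ((Multiset.card T' : ℝ))⁻¹ * ((Multiset.card T : ℝ) * (v ⬝ᵥ (W * H * W).mulVec v)) := by
      rw [← hTsum]
      exact mul_le_mul_of_nonneg_left hmono (by positivity)
    have h2 : ((Multiset.card T' : ℝ))⁻¹ * ((Multiset.card T : ℝ) * (v ⬝ᵥ (W * H * W).mulVec v))
        = ((Multiset.card T : ℝ) / (Multiset.card T' : ℝ)) * (v ⬝ᵥ (W * H * W).mulVec v) := by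
      ring
    have h3 : ((Multiset.card T : ℝ) / (Multiset.card T' : ℝ)) * (v ⬝ᵥ (W * H * W).mulVec v)
        ≤ (2 / α) * (v ⬝ᵥ v) := by
      have h4 : ((Multiset.card T : ℝ) / (Multiset.card T' : ℝ)) * (v ⬝ᵥ (W * H * W).mulVec v)
          ≤ (2 / α) * (v ⬝ᵥ (W * H * W).mulVec v) := mul_le_mul_of_nonneg_right hratio hq0
      have h5 : (2 / α) * (v ⬝ᵥ (W * H * W).mulVec v) ≤ (2 / α) * (v ⬝ᵥ v) :=
        mul_le_mul_of_nonneg_left hq1 (by positivity)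
      linarith
    linarith
  -- covariance quadratic form
  have hqC : ∀ v : Fin d → ℝ, v ⬝ᵥ (msCov T' (fun x => W.mulVec x)).mulVec v
      = v ⬝ᵥ (msAvg T' fun x => Matrix.vecMulVec (W.mulVec x) (W.mulVec x)).mulVec v
        - (v ⬝ᵥ msAvg T' (fun x => W.mulVec x)) ^ 2 := by
    intro v
    have hsub' := map_sub (qfL v)
      (msAvg T' fun x => Matrix.vecMulVec (W.mulVec x) (W.mulVec x))
      (Matrix.vecMulVec (msAvg T' (fun x => W.mulVec x)) (msAvg T' (fun x => W.mulVec x)))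
    simp only [qfL_apply] at hsub'
    rw [msCov, hsub', qf_vecMulVec]
  -- variance nonnegativity
  have hvarNN : ∀ v : Fin d → ℝ,
      0 ≤ v ⬝ᵥ (msCov T' (fun x => W.mulVec x)).mulVec v := by
    intro v
    rw [hqC v, qf_msAvg, dot_msAvg]
    have e2 : (T'.map (fun x => v ⬝ᵥ (Matrix.vecMulVec (W.mulVec x) (W.mulVec x)).mulVec v))
        = T'.map (fun x => (v ⬝ᵥ W.mulVec x) ^ 2) := by
      apply Multiset.map_congr rfl
      intro x _
      rw [qf_vecMulVec]
    rw [e2]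
    set m : ℝ := ((Multiset.card T' : ℝ))⁻¹ * (T'.map (fun x => v ⬝ᵥ W.mulVec x)).sum with hm
    have hvar : ((Multiset.card T' : ℝ))⁻¹ * (T'.map (fun x => (v ⬝ᵥ W.mulVec x) ^ 2)).sum - m ^ 2
        = ((Multiset.card T' : ℝ))⁻¹
          * (T'.map (fun x => (v ⬝ᵥ W.mulVec x - m) ^ 2)).sum := by
      rw [sum_sq_sub]
      rw [hm]
      field_simp
      ring
    rw [hvar]
    have : 0 ≤ (T'.map (fun x => (v ⬝ᵥ W.mulVec x - m) ^ 2)).sum := by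
      apply Multiset.sum_nonneg
      intro y hy
      obtain ⟨z, _, rfl⟩ := Multiset.mem_map.mp hy
      exact sq_nonneg _
    positivity
  -- PSD of the covariance
  have hCt : (msCov T' (fun x => W.mulVec x))ᵀ = msCov T' (fun x => W.mulVec x) := by
    rw [msCov, Matrix.transpose_sub, msAvg_transpose, vecMulVec_transpose']
    simp only [vecMulVec_transpose']
  have hCpsd : (msCov T' (fun x => W.mulVec x)).PosSemidef := by
    refine Matrix.PosSemidef.of_dotProduct_mulVec_nonneg ?_ ?_
    · rw [Matrix.IsHermitian, Matrix.conjTranspose_eq_transpose_of_trivial, hCt]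
    · intro x
      simpa using hvarNN x
  constructor
  · -- operator norm bound
    apply opNorm_le_of_qf hCpsd (by positivity)
    intro v
    have h1 := keyM v
    have h2 := hqC v
    nlinarith [sq_nonneg (v ⬝ᵥ msAvg T' (fun x => W.mulVec x))]
  · -- mean bound
    set μ : Fin d → ℝ := msAvg T' (fun x => W.mulVec x) with hμ
    have h1 := keyM μ
    have h2 := hqC μ
    have h3 := hvarNN μ
    have hdd : 0 ≤ μ ⬝ᵥ μ := dot_self_nonneg' μ
    have h4 : (μ ⬝ᵥ μ) ^ 2 ≤ 2 / α * (μ ⬝ᵥ μ) := by nlinarith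
    have h5 : μ ⬝ᵥ μ ≤ 2 / α := by
      rcases eq_or_lt_of_le hdd with h | h
      · rw [← h]; positivity
      · nlinarith
    have h6 : ∑ i, (μ i) ^ 2 = μ ⬝ᵥ μ := by
      simp [dotProduct, sq]
    rw [vecNorm, h6]
    exact Real.sqrt_le_sqrt h5

end ListDecCov
end
end

section
/- Let G be a d×d real matrix with singular value decomposition G = U Λ Vᵀ, where U and V are orthogonal d×d matrices and Λ is a diagonal matrix with nonnegative entries. Let B be a symmetric d×d matrix and let ρ ≥ 1 be such that ‖G G† − G B Gᵀ‖_F ≤ ρ. Then there exists a diagonal d×d matrix Δ with all diagonal entries in {0,1}, satisfying: (1) every diagonal entry of Δ equal to 1 occurs at a position where the corresponding diagonal entry of Λ is strictly positive (equivalently, Δ ⪯ Λ Λ†); (2) ‖Λ Λ† − Δ‖_F ≤ 2ρ; and (3) with L = V Δ Vᵀ and R = G†, ‖L (R Rᵀ − B) Lᵀ‖_F ≤ 2ρ·‖B‖_op. -/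
open Matrix MeasureTheory ProbabilityTheory

noncomputable section

namespace ListDecCov


lemma mp_unique {d : ℕ} (H X Y : Matrix (Fin d) (Fin d) ℝ)
    (hx : IsMoorePenrose H X) (hy : IsMoorePenrose H Y) : X = Y := by
  obtain ⟨hx1, hx2, hx3, hx4⟩ := hx
  obtain ⟨hy1, hy2, hy3, hy4⟩ := hy
  have key1 : H * X = H * Y := by
    calc H * X = (H * X)ᵀ := hx3.symm
    _ = Xᵀ * Hᵀ := by rw [transpose_mul]
    _ = Xᵀ * (H * Y * H)ᵀ := by rw [hy1]
    _ = Xᵀ * (Hᵀ * (H*Y)ᵀ) := by rw [transpose_mul]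
    _ = (Xᵀ * Hᵀ) * (H*Y) := by rw [hy3]; simp [mul_assoc]
    _ = (H * X)ᵀ * (H * Y) := by rw [transpose_mul]
    _ = (H * X) * (H * Y) := by rw [hx3]
    _ = (H * X * H) * Y := by simp [mul_assoc]
    _ = H * Y := by rw [hx1]
  have key2 : X * H = Y * H := by
    calc X * H = (X * H)ᵀ := hx4.symm
    _ = Hᵀ * Xᵀ := by rw [transpose_mul]
    _ = (H * Y * H)ᵀ * Xᵀ := by rw [hy1]
    _ = ((Y*H)ᵀ * Hᵀ) * Xᵀ := by rw [transpose_mul, transpose_mul]; simp [mul_assoc]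
    _ = (Y*H) * (Hᵀ * Xᵀ) := by rw [hy4]; simp [mul_assoc]
    _ = (Y*H) * (X * H)ᵀ := by rw [transpose_mul]
    _ = (Y*H) * (X * H) := by rw [hx4]
    _ = Y * (H * X * H) := by simp [mul_assoc]
    _ = Y * H := by rw [hx1]
  calc X = X * H * X := hx2.symm
  _ = Y * H * X := by rw [key2]
  _ = Y * (H * X) := by simp [mul_assoc]
  _ = Y * (H * Y) := by rw [key1]
  _ = Y * H * Y := by simp [mul_assoc]
  _ = Y := hy2

lemma diag_penrose {d : ℕ} (f : Fin d → ℝ) :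
    IsMoorePenrose (Matrix.diagonal f)
      (Matrix.diagonal (fun i => if f i = 0 then 0 else (f i)⁻¹)) := by
  set L := Matrix.diagonal f
  set Lp := Matrix.diagonal (fun i => if f i = 0 then 0 else (f i)⁻¹) with hLp
  have h1 : L * Lp * L = L := by
    simp only [L, Lp, diagonal_mul_diagonal]
    ext i j
    rcases eq_or_ne i j with rfl | hij
    · by_cases h : f i = 0 <;> simp [h]
    · simp [diagonal_apply_ne _ hij]
  have h2 : Lp * L * Lp = Lp := by
    simp only [L, Lp, diagonal_mul_diagonal]
    ext i j
    rcases eq_or_ne i j with rfl | hij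
    · by_cases h : f i = 0 <;> simp [h]
    · simp [diagonal_apply_ne _ hij]
  refine ⟨h1, h2, ?_, ?_⟩ <;>
    simp only [L, Lp, diagonal_mul_diagonal, diagonal_transpose]

lemma frobNorm_eq_trace {d : ℕ} (M : Matrix (Fin d) (Fin d) ℝ) :
    frobNorm M = Real.sqrt (Matrix.trace (Mᵀ * M)) := by
  unfold frobNorm
  congr 1
  rw [Matrix.trace]
  simp only [Matrix.diag, Matrix.mul_apply, Matrix.transpose_apply]
  rw [Finset.sum_comm]
  congr 1; funext i; congr 1; funext j; ring

lemma frobNorm_conj {d : ℕ} (U W M : Matrix (Fin d) (Fin d) ℝ)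
    (hU : Uᵀ * U = 1) (hW : Wᵀ * W = 1) :
    frobNorm (U * M * Wᵀ) = frobNorm M := by
  rw [frobNorm_eq_trace, frobNorm_eq_trace]
  have h1 : (U * M * Wᵀ)ᵀ * (U * M * Wᵀ) = W * (Mᵀ * M) * Wᵀ := by
    simp only [transpose_mul, transpose_transpose]
    calc W * (Mᵀ * Uᵀ) * (U * M * Wᵀ) = W * Mᵀ * (Uᵀ * U) * M * Wᵀ := by
          simp [mul_assoc]
    _ = W * (Mᵀ * M) * Wᵀ := by rw [hU]; simp [mul_assoc]
  rw [h1, Matrix.trace_mul_cycle, hW, one_mul]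

lemma frobNorm_le_of_entries {d : ℕ} (A N : Matrix (Fin d) (Fin d) ℝ) (c : ℝ)
    (hc : 0 ≤ c) (h : ∀ i j, (A i j) ^ 2 ≤ c ^ 2 * (N i j) ^ 2) :
    frobNorm A ≤ c * frobNorm N := by
  unfold frobNorm
  rw [← Real.sqrt_sq hc, ← Real.sqrt_mul (sq_nonneg c)]
  apply Real.sqrt_le_sqrt
  rw [Finset.mul_sum]
  apply Finset.sum_le_sum
  intro i _
  rw [Finset.mul_sum]
  exact Finset.sum_le_sum fun j _ => h i j

lemma quad_le_opNorm {d : ℕ} (B : Matrix (Fin d) (Fin d) ℝ) (v : Fin d → ℝ)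
    (hv : ∑ i, (v i) ^ 2 = 1) : v ⬝ᵥ B.mulVec v ≤ opNorm B := by
  set x : EuclideanSpace ℝ (Fin d) := (WithLp.equiv 2 _).symm v with hx
  have hnx : ‖x‖ = 1 := by
    rw [EuclideanSpace.norm_eq]
    simp only [hx, WithLp.equiv_symm_apply, WithLp.ofLp_toLp, Real.norm_eq_abs, sq_abs]
    rw [hv, Real.sqrt_one]
  have happ : Matrix.toEuclideanCLM (𝕜 := ℝ) B x = (WithLp.equiv 2 _).symm (B.mulVec v) :=
    Matrix.toEuclideanCLM_toLp B v
  have hinner : v ⬝ᵥ B.mulVec v = inner ℝ x (Matrix.toEuclideanCLM (𝕜 := ℝ) B x) := by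
    rw [happ, real_inner_comm]
    simp only [PiLp.inner_apply, RCLike.inner_apply, starRingEnd_apply, star_trivial,
      WithLp.equiv_symm_apply, WithLp.ofLp_toLp, dotProduct, hx]
  rw [hinner]
  calc inner ℝ x (Matrix.toEuclideanCLM (𝕜 := ℝ) B x)
      ≤ ‖x‖ * ‖Matrix.toEuclideanCLM (𝕜 := ℝ) B x‖ := real_inner_le_norm _ _
  _ ≤ ‖x‖ * (‖Matrix.toEuclideanCLM (𝕜 := ℝ) B‖ * ‖x‖) := by
      apply mul_le_mul_of_nonneg_left ((Matrix.toEuclideanCLM (𝕜 := ℝ) B).le_opNorm x)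
        (norm_nonneg x)
  _ = opNorm B := by rw [hnx, one_mul, mul_one]; rfl

lemma conj_mul {d : ℕ} (U V W A B : Matrix (Fin d) (Fin d) ℝ) (h : Vᵀ * V = 1) :
    (U * A * Vᵀ) * (V * B * W) = U * (A * B) * W := by
  calc (U * A * Vᵀ) * (V * B * W) = U * A * (Vᵀ * V) * (B * W) := by simp [mul_assoc]
  _ = U * (A * B) * W := by rw [h, mul_one]; simp [mul_assoc]


set_option maxHeartbeats 1000000 in
/-- given an SVD `G = U Λ Vᵀ` and a symmetric `B` with
`‖G G† − G B Gᵀ‖_F ≤ ρ`, there is a 0/1 diagonal matrix `Δ` supported on the nonzero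
singular values of `G` with `‖Λ Λ† − Δ‖_F ≤ 2ρ`, and with `L = V Δ Vᵀ`, `R = G†`,
`‖L (R Rᵀ − B) Lᵀ‖_F ≤ 2ρ‖B‖_op`. Pseudoinverses are specified via Penrose equations. -/
theorem statement16 (d : ℕ) (G U Λ V B Gd Λd : Matrix (Fin d) (Fin d) ℝ)
    (hU : Uᵀ * U = 1) (hV : Vᵀ * V = 1)
    (hΛdiag : Λ.IsDiag) (hΛnonneg : ∀ i, 0 ≤ Λ i i)
    (hSVD : G = U * Λ * Vᵀ)
    (hB : B.IsSymm) (ρ : ℝ) (hρ : 1 ≤ ρ)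
    (hGd : IsMoorePenrose G Gd) (hΛd : IsMoorePenrose Λ Λd)
    (hbound : frobNorm (G * Gd - G * B * Gᵀ) ≤ ρ) :
    ∃ Δ : Matrix (Fin d) (Fin d) ℝ, Δ.IsDiag ∧
      (∀ i, Δ i i = 0 ∨ Δ i i = 1) ∧
      (∀ i, Δ i i = 1 → 0 < Λ i i) ∧
      frobNorm (Λ * Λd - Δ) ≤ 2 * ρ ∧
      frobNorm ((V * Δ * Vᵀ) * (Gd * Gdᵀ - B) * (V * Δ * Vᵀ)ᵀ) ≤ 2 * ρ * opNorm B := by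
  have hVV : V * Vᵀ = 1 := mul_eq_one_comm.mp hV
  have hUU : U * Uᵀ = 1 := mul_eq_one_comm.mp hU
  set lam : Fin d → ℝ := fun i => Λ i i with hlam
  have hΛeq : Λ = Matrix.diagonal lam := by
    ext i j
    rcases eq_or_ne i j with rfl | hij
    · simp [hlam]
    · simp [Matrix.diagonal_apply_ne _ hij, hΛdiag hij]
  set g : Fin d → ℝ := fun i => if lam i = 0 then 0 else (lam i)⁻¹ with hg
  set Λp := Matrix.diagonal g with hΛpdef
  have hΛpMP : IsMoorePenrose Λ Λp := by rw [hΛeq]; exact diag_penrose lam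
  have hΛdp : Λd = Λp := mp_unique Λ Λd Λp hΛd hΛpMP
  set C := Vᵀ * B * V with hC
  -- Gp is MP pseudoinverse of G
  set Gp := V * Λp * Uᵀ with hGpdef
  have hGGp : G * Gp = U * (Λ * Λp) * Uᵀ := by
    rw [hSVD, hGpdef]; exact conj_mul U V Uᵀ Λ Λp hV
  have hGpG : Gp * G = V * (Λp * Λ) * Vᵀ := by
    rw [hSVD, hGpdef]; exact conj_mul V U Vᵀ Λp Λ hU
  have hΛpT : Λpᵀ = Λp := by rw [hΛpdef, diagonal_transpose]
  have hΛT : Λᵀ = Λ := by rw [hΛeq, diagonal_transpose]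
  have hGpMP : IsMoorePenrose G Gp := by
    obtain ⟨p1, p2, p3, p4⟩ := hΛpMP
    refine ⟨?_, ?_, ?_, ?_⟩
    · rw [hGGp, hSVD]
      calc U * (Λ * Λp) * Uᵀ * (U * Λ * Vᵀ) = U * (Λ * Λp * Λ) * Vᵀ :=
            conj_mul U U Vᵀ (Λ * Λp) Λ hU
      _ = U * Λ * Vᵀ := by rw [p1]
    · rw [mul_assoc, hGGp, hGpdef]
      calc V * Λp * Uᵀ * (U * (Λ * Λp) * Uᵀ) = V * (Λp * (Λ * Λp)) * Uᵀ :=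
            conj_mul V U Uᵀ Λp (Λ * Λp) hU
      _ = V * Λp * Uᵀ := by rw [show Λp * (Λ * Λp) = Λp from by rw [← mul_assoc]; exact p2]
    · rw [hGGp]
      calc (U * (Λ * Λp) * Uᵀ)ᵀ = U * (Λ * Λp)ᵀ * Uᵀ := by
            simp [transpose_mul, mul_assoc]
      _ = U * (Λ * Λp) * Uᵀ := by rw [p3]
    · rw [hGpG]
      calc (V * (Λp * Λ) * Vᵀ)ᵀ = V * (Λp * Λ)ᵀ * Vᵀ := by
            simp [transpose_mul, mul_assoc]
      _ = V * (Λp * Λ) * Vᵀ := by rw [p4]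
  have hGdp : Gd = Gp := mp_unique G Gd Gp hGd hGpMP
  -- transport the bound
  set N := Λ * Λp - Λ * C * Λ with hN
  have hGBGT : G * B * Gᵀ = U * (Λ * C * Λ) * Uᵀ := by
    rw [hSVD, hC]
    simp only [transpose_mul, transpose_transpose, hΛT]
    simp [mul_assoc]
  have hNbound : frobNorm N ≤ ρ := by
    have he : G * Gd - G * B * Gᵀ = U * N * Uᵀ := by
      rw [hGdp, hGGp, hGBGT, hN, Matrix.mul_sub, Matrix.sub_mul]
    rw [he, frobNorm_conj U U N hU hU] at hbound
    exact hbound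
  -- entries of N
  have hNdiag : ∀ i, N i i = lam i * g i - lam i * C i i * lam i := by
    intro i
    rw [hN, hΛeq, hΛpdef]
    simp [diagonal_mul_diagonal, Matrix.diagonal_mul, Matrix.mul_diagonal]
  have hNoff : ∀ i j, i ≠ j → N i j = - (lam i * C i j * lam j) := by
    intro i j hij
    rw [hN, hΛeq, hΛpdef]
    simp [diagonal_mul_diagonal, Matrix.diagonal_apply_ne _ hij,
      Matrix.diagonal_mul, Matrix.mul_diagonal]
  -- C i i ≤ opNorm B
  have hCii : ∀ i, C i i ≤ opNorm B := by
    intro i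
    have hcol : ∑ k, (V k i) ^ 2 = 1 := by
      have := congrArg (fun M => M i i) hV
      simpa [Matrix.mul_apply, sq] using this
    have hform : C i i = (fun k => V k i) ⬝ᵥ B.mulVec (fun k => V k i) := by
      rw [hC]
      simp only [Matrix.mul_apply, Matrix.transpose_apply, dotProduct, Matrix.mulVec,
        Finset.sum_mul, Finset.mul_sum]
      rw [Finset.sum_comm]
      apply Finset.sum_congr rfl; intro k _
      apply Finset.sum_congr rfl; intro l _
      ring
    rw [hform]
    exact quad_le_opNorm B _ hcol
  have hopB : 0 ≤ opNorm B := norm_nonneg _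
  -- define Δ
  set δ : Fin d → ℝ := fun i => if (1:ℝ)/2 ≤ (lam i) ^ 2 * C i i then 1 else 0 with hδ
  have hδval : ∀ i, ((1:ℝ)/2 ≤ (lam i) ^ 2 * C i i → δ i = 1) ∧
      (¬ ((1:ℝ)/2 ≤ (lam i) ^ 2 * C i i) → δ i = 0) := by
    intro i
    constructor
    · intro h; simp only [hδ]; rw [if_pos h]
    · intro h; simp only [hδ]; rw [if_neg h]
  have hδpos : ∀ i, δ i = 1 → 0 < lam i := by
    intro i hi
    by_cases h : (1:ℝ)/2 ≤ (lam i) ^ 2 * C i i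
    · rcases (hΛnonneg i).lt_or_eq with hpos | hzero
      · exact hpos
      · exfalso
        have hl0 : lam i = 0 := hzero.symm
        rw [hl0] at h; norm_num at h
    · rw [(hδval i).2 h] at hi; norm_num at hi
  refine ⟨Matrix.diagonal δ, Matrix.isDiag_diagonal δ, ?_, ?_, ?_, ?_⟩
  · intro i
    rw [Matrix.diagonal_apply_eq]
    by_cases h : (1:ℝ)/2 ≤ (lam i) ^ 2 * C i i
    · right; exact (hδval i).1 h
    · left; exact (hδval i).2 h
  · intro i hi
    rw [Matrix.diagonal_apply_eq] at hi
    exact hδpos i hi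
  · -- second bound
    have key : ∀ i j, ((Λ * Λd - Matrix.diagonal δ) i j) ^ 2 ≤ 2 ^ 2 * (N i j) ^ 2 := by
      intro i j
      rcases eq_or_ne i j with rfl | hij
      · have hA : (Λ * Λd - Matrix.diagonal δ) i i = lam i * g i - δ i := by
          rw [hΛdp, hΛeq, hΛpdef]
          simp [diagonal_mul_diagonal]
        rw [hA, hNdiag i]
        by_cases hz : lam i = 0
        · have hδ0 : δ i = 0 := by
            apply (hδval i).2
            rw [hz]; norm_num
          rw [hz, hδ0]
          have hg0 : g i = 0 := by simp [hg, hz]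
          rw [hg0]
          norm_num
        · have hgz : g i = (lam i)⁻¹ := by simp [hg, hz]
          have hlg : lam i * g i = 1 := by rw [hgz]; field_simp
          rw [hlg]
          have h1 : lam i * C i i * lam i = (lam i)^2 * C i i := by ring
          rw [h1]
          by_cases hcond : (1:ℝ)/2 ≤ (lam i) ^ 2 * C i i
          · rw [(hδval i).1 hcond]
            nlinarith [sq_nonneg (1 - (lam i)^2 * C i i)]
          · rw [(hδval i).2 hcond]
            push_neg at hcond
            nlinarith
      · have hA : (Λ * Λd - Matrix.diagonal δ) i j = 0 := by
          rw [hΛdp, hΛeq, hΛpdef]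
          simp [diagonal_mul_diagonal, Matrix.diagonal_apply_ne _ hij]
        rw [hA]
        norm_num
        positivity
    calc frobNorm (Λ * Λd - Matrix.diagonal δ) ≤ 2 * frobNorm N :=
          frobNorm_le_of_entries _ N 2 (by norm_num) key
    _ ≤ 2 * ρ := by linarith [hNbound]
  · -- third bound
    set E := Λp * Λp - C with hE
    have hLT : (V * Matrix.diagonal δ * Vᵀ)ᵀ = V * Matrix.diagonal δ * Vᵀ := by
      simp [transpose_mul, diagonal_transpose, mul_assoc]
    have hGdGdT : Gd * Gdᵀ = V * (Λp * Λp) * Vᵀ := by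
      rw [hGdp, hGpdef]
      have ht : (V * Λp * Uᵀ)ᵀ = U * Λp * Vᵀ := by
        simp [transpose_mul, hΛpT, mul_assoc]
      rw [ht]
      exact conj_mul V U Vᵀ Λp Λp hU
    have hBconj : B = V * C * Vᵀ := by
      rw [hC]
      calc B = (V * Vᵀ) * B * (V * Vᵀ) := by rw [hVV]; simp
      _ = V * (Vᵀ * B * V) * Vᵀ := by simp [mul_assoc]
    have hmid : Gd * Gdᵀ - B = V * E * Vᵀ := by
      rw [hGdGdT]
      nth_rewrite 1 [hBconj]
      rw [hE, Matrix.mul_sub, Matrix.sub_mul]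
    have hprod : (V * Matrix.diagonal δ * Vᵀ) * (Gd * Gdᵀ - B) * (V * Matrix.diagonal δ * Vᵀ)ᵀ
        = V * (Matrix.diagonal δ * E * Matrix.diagonal δ) * Vᵀ := by
      rw [hmid, hLT]
      calc (V * Matrix.diagonal δ * Vᵀ) * (V * E * Vᵀ) * (V * Matrix.diagonal δ * Vᵀ)
          = (V * (Matrix.diagonal δ * E) * Vᵀ) * (V * Matrix.diagonal δ * Vᵀ) := by
            rw [conj_mul V V Vᵀ (Matrix.diagonal δ) E hV]
      _ = V * (Matrix.diagonal δ * E * Matrix.diagonal δ) * Vᵀ := by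
            rw [conj_mul V V Vᵀ (Matrix.diagonal δ * E) (Matrix.diagonal δ) hV]
    rw [hprod, frobNorm_conj V V _ hV hV]
    have key : ∀ i j, ((Matrix.diagonal δ * E * Matrix.diagonal δ) i j) ^ 2
        ≤ (2 * opNorm B) ^ 2 * (N i j) ^ 2 := by
      intro i j
      have hMentry : (Matrix.diagonal δ * E * Matrix.diagonal δ) i j = δ i * E i j * δ j := by
        simp [Matrix.diagonal_mul, Matrix.mul_diagonal]
      rw [hMentry]
      by_cases hi : (1:ℝ)/2 ≤ (lam i) ^ 2 * C i i
      · by_cases hj : (1:ℝ)/2 ≤ (lam j) ^ 2 * C j j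
        · -- both selected
          have hδi : δ i = 1 := (hδval i).1 hi
          have hδj : δ j = 1 := (hδval j).1 hj
          have hzi : lam i ≠ 0 := ne_of_gt (hδpos i hδi)
          have hzj : lam j ≠ 0 := ne_of_gt (hδpos j hδj)
          have hki : 1 ≤ 2 * opNorm B * (lam i)^2 := by
            have h2 : (lam i)^2 * C i i ≤ (lam i)^2 * opNorm B :=
              mul_le_mul_of_nonneg_left (hCii i) (sq_nonneg _)
            nlinarith
          have hkj : 1 ≤ 2 * opNorm B * (lam j)^2 := by
            have h2 : (lam j)^2 * C j j ≤ (lam j)^2 * opNorm B :=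
              mul_le_mul_of_nonneg_left (hCii j) (sq_nonneg _)
            nlinarith
          have hgi : g i = (lam i)⁻¹ := by simp [hg, hzi]
          have hgj : g j = (lam j)⁻¹ := by simp [hg, hzj]
          have hEij : E i j = (if i = j then g i * g i else 0) - C i j := by
            rw [hE, hΛpdef]
            rcases eq_or_ne i j with rfl | hij
            · simp [diagonal_mul_diagonal]
            · simp [diagonal_mul_diagonal, Matrix.diagonal_apply_ne _ hij, hij]
          have hErel : N i j = lam i * lam j * E i j := by
            rcases eq_or_ne i j with rfl | hij
            · rw [hNdiag i, hEij]
              rw [if_pos rfl, hgi]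
              field_simp
            · rw [hNoff i j hij, hEij, if_neg hij]
              ring
          rw [hδi, hδj, one_mul, mul_one, hErel]
          have h12 : 1 ≤ (2 * opNorm B * (lam i)^2) * (2 * opNorm B * (lam j)^2) := by
            have := mul_le_mul hki hkj zero_le_one (zero_le_one.trans hki)
            linarith
          calc (E i j)^2 = 1 * (E i j)^2 := by ring
          _ ≤ ((2 * opNorm B * (lam i)^2) * (2 * opNorm B * (lam j)^2)) * (E i j)^2 :=
              mul_le_mul_of_nonneg_right h12 (sq_nonneg _)
          _ = (2 * opNorm B) ^ 2 * (lam i * lam j * E i j) ^ 2 := by ring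
        · rw [(hδval j).2 hj, mul_zero]
          norm_num
          positivity
      · rw [(hδval i).2 hi, zero_mul, zero_mul]
        norm_num
        positivity
    calc frobNorm (Matrix.diagonal δ * E * Matrix.diagonal δ)
        ≤ (2 * opNorm B) * frobNorm N :=
          frobNorm_le_of_entries _ N (2 * opNorm B) (by linarith) key
    _ ≤ (2 * opNorm B) * ρ := by
        apply mul_le_mul_of_nonneg_left hNbound (by linarith)
    _ = 2 * ρ * opNorm B := by ring

end ListDecCov
end
end

section
/- Let A' be a symmetric d×d real matrix all of whose eigenvalues belong to {−1, 0, 1}, and let B' be an arbitrary d×d real matrix. Then ‖B' − A'‖_F² ≥ rank(A') − rank(B'). -/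
open Matrix MeasureTheory ProbabilityTheory

noncomputable section

namespace ListDecCov

/-- if `A'` is symmetric with all eigenvalues in `{−1, 0, 1}`, then for any
matrix `B'`, `‖B' − A'‖_F² ≥ rank(A') − rank(B')`. -/
theorem statement17 (d : ℕ) (A' B' : Matrix (Fin d) (Fin d) ℝ)
    (hA : A'.IsHermitian)
    (heig : ∀ i, hA.eigenvalues i ∈ ({-1, 0, 1} : Set ℝ)) :
    (A'.rank : ℝ) - (B'.rank : ℝ) ≤ frobNorm (B' - A') ^ 2 := by
  classical
  -- A'ᵀ = A'
  have hsym : A'ᵀ = A' := by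
    have := hA.eq
    simpa [Matrix.conjTranspose_eq_transpose_of_trivial] using hA.eq
  -- A' * A' * A' = A'
  have hA3 : A' * A' * A' = A' := by
    have hU : (star (hA.eigenvectorUnitary : Matrix (Fin d) (Fin d) ℝ)) *
        (hA.eigenvectorUnitary : Matrix (Fin d) (Fin d) ℝ) = 1 :=
      (Matrix.mem_unitaryGroup_iff'.mp hA.eigenvectorUnitary.2)
    set U := (hA.eigenvectorUnitary : Matrix (Fin d) (Fin d) ℝ)
    set D := Matrix.diagonal ((RCLike.ofReal : ℝ → ℝ) ∘ hA.eigenvalues) with hD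
    have hfun : (fun i => ((RCLike.ofReal : ℝ → ℝ) ∘ hA.eigenvalues) i
        * ((RCLike.ofReal : ℝ → ℝ) ∘ hA.eigenvalues) i
        * ((RCLike.ofReal : ℝ → ℝ) ∘ hA.eigenvalues) i)
        = (RCLike.ofReal : ℝ → ℝ) ∘ hA.eigenvalues := by
      funext i
      have := heig i
      simp only [Set.mem_insert_iff, Set.mem_singleton_iff] at this
      simp only [Function.comp_apply, RCLike.ofReal_real_eq_id, id_eq]
      rcases this with h | h | h <;> rw [h] <;> ring
    have hDDD : D * D * D = D := by
      rw [hD, diagonal_mul_diagonal, diagonal_mul_diagonal]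
      exact congrArg diagonal hfun
    have hst : A' = U * D * star U := hA.spectral_theorem
    calc A' * A' * A'
        = U * (D * ((star U * U) * (D * ((star U * U) * (D * star U))))) := by
          rw [hst]; simp only [Matrix.mul_assoc]
      _ = U * (D * D * D) * star U := by rw [hU]; simp only [Matrix.one_mul, Matrix.mul_assoc]
      _ = A' := by rw [hDDD, ← hst]
  -- dimension counting
  set V0 := LinearMap.range A'.mulVecLin with hV0
  set N0 := LinearMap.ker B'.mulVecLin with hN0
  set W0 : Submodule ℝ (Fin d → ℝ) := V0 ⊓ N0 with hW0
  have hrk : B'.rank + Module.finrank ℝ N0 = d := by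
    rw [Matrix.rank, LinearMap.finrank_range_add_finrank_ker]
    simp [Module.finrank_fin_fun]
  have hdim : A'.rank ≤ Module.finrank ℝ W0 + B'.rank := by
    have h1 := Submodule.finrank_sup_add_finrank_inf_eq V0 N0
    have h2 : Module.finrank ℝ (V0 ⊔ N0 : Submodule ℝ (Fin d → ℝ)) ≤ d := by
      have := Submodule.finrank_le (V0 ⊔ N0)
      simpa [Module.finrank_fin_fun] using this
    have h3 : A'.rank = Module.finrank ℝ V0 := rfl
    have h4 : Module.finrank ℝ W0 = Module.finrank ℝ (V0 ⊓ N0 : Submodule ℝ (Fin d → ℝ)) := rfl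
    omega
  -- move to Euclidean space
  set le := WithLp.linearEquiv 2 ℝ (Fin d → ℝ) with hle
  set W : Submodule ℝ (EuclideanSpace ℝ (Fin d)) :=
    W0.map (le.symm : (Fin d → ℝ) →ₗ[ℝ] EuclideanSpace ℝ (Fin d)) with hW
  have hWdim : Module.finrank ℝ W = Module.finrank ℝ W0 := LinearEquiv.finrank_map_eq _ _
  set m := Module.finrank ℝ W with hm
  set bW := stdOrthonormalBasis ℝ W with hbW
  set v : Fin m → EuclideanSpace ℝ (Fin d) := fun j => (bW j : EuclideanSpace ℝ (Fin d)) with hv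
  have hvon : Orthonormal ℝ v := bW.orthonormal.comp_linearIsometry W.subtypeₗᵢ
  have hmemW : ∀ j, WithLp.equiv 2 (Fin d → ℝ) (v j) ∈ W0 := by
    intro j
    have : (v j) ∈ W := (bW j).2
    rw [hW] at this
    obtain ⟨y, hy, hxy⟩ := this
    have : WithLp.equiv 2 (Fin d → ℝ) (v j) = y := by
      rw [← hxy]; rfl
    rwa [this]
  -- for each j : toEuclideanLin (B' - A') (v j) has norm 1
  have hnorm : ∀ j, ‖(Matrix.toEuclideanLin (B' - A')) (v j)‖ ^ 2 = 1 := by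
    intro j
    obtain ⟨hVj, hNj⟩ := hmemW j
    set x := v j with hx
    set ex := WithLp.equiv 2 (Fin d → ℝ) x with hex
    obtain ⟨w, hw⟩ := hVj
    have hNx : B' *ᵥ ex = 0 := hNj
    have hAAx : A' *ᵥ (A' *ᵥ ex) = ex := by
      have : ex = A' *ᵥ w := by rw [← hw]; rfl
      rw [this, Matrix.mulVec_mulVec, Matrix.mulVec_mulVec, hA3]
    have hsubv : (Matrix.toEuclideanLin (B' - A')) x = - (Matrix.toEuclideanLin A') x := by
      rw [map_sub, LinearMap.sub_apply]
      have : (Matrix.toEuclideanLin B') x = 0 := by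
        rw [Matrix.toEuclideanLin_apply]
        change WithLp.toLp 2 (B' *ᵥ ex) = 0
        rw [hNx]
        rfl
      rw [this, zero_sub]
    rw [hsubv, norm_neg]
    have hx1 : ‖x‖ = 1 := hvon.1 j
    have hnormsq : ‖(Matrix.toEuclideanLin A') x‖ ^ 2 = ‖x‖ ^ 2 := by
      rw [EuclideanSpace.norm_eq, EuclideanSpace.norm_eq,
        Real.sq_sqrt (by positivity), Real.sq_sqrt (by positivity)]
      have hL : ∑ i, ‖(Matrix.toEuclideanLin A') x i‖ ^ 2 = (A' *ᵥ ex) ⬝ᵥ (A' *ᵥ ex) := by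
        simp [Matrix.toEuclideanLin_apply, dotProduct, Real.norm_eq_abs, sq_abs, sq, ← hex]
        rfl
      have hR : ∑ i, ‖x i‖ ^ 2 = ex ⬝ᵥ ex := by
        simp [dotProduct, Real.norm_eq_abs, sq_abs, sq, hex]
      rw [hL, hR, Matrix.dotProduct_mulVec, ← Matrix.mulVec_transpose, hsym, hAAx]
    rw [hnormsq, hx1]; norm_num
  -- Bessel bound
  have hbessel : ∑ j, ‖(Matrix.toEuclideanLin (B' - A')) (v j)‖ ^ 2
      ≤ ∑ i, ∑ l, ((B' - A') i l) ^ 2 := by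
    set M := B' - A' with hM
    set u : Fin d → EuclideanSpace ℝ (Fin d) :=
      fun i => (WithLp.equiv 2 (Fin d → ℝ)).symm (M i) with hu
    have key : ∀ (x : EuclideanSpace ℝ (Fin d)),
        ‖(Matrix.toEuclideanLin M) x‖ ^ 2 = ∑ i, ‖(inner ℝ x (u i) : ℝ)‖ ^ 2 := by
      intro x
      rw [EuclideanSpace.norm_eq, Real.sq_sqrt (by positivity)]
      refine Finset.sum_congr rfl fun i _ => ?_
      simp only [Matrix.toEuclideanLin_apply, hu, PiLp.inner_apply, RCLike.inner_apply,
        WithLp.equiv_symm_apply, PiLp.toLp_apply, conj_trivial, Real.norm_eq_abs, sq_abs,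
        Matrix.mulVec, dotProduct]
    have hun : ∀ i, ‖u i‖ ^ 2 = ∑ l, (M i l) ^ 2 := by
      intro i
      rw [EuclideanSpace.norm_eq, Real.sq_sqrt (by positivity)]
      simp [hu, sq_abs]
    calc ∑ j, ‖(Matrix.toEuclideanLin M) (v j)‖ ^ 2
        = ∑ j, ∑ i, ‖(inner ℝ (v j) (u i) : ℝ)‖ ^ 2 :=
          Finset.sum_congr rfl fun j _ => key (v j)
      _ = ∑ i, ∑ j, ‖(inner ℝ (v j) (u i) : ℝ)‖ ^ 2 := Finset.sum_comm
      _ ≤ ∑ i, ‖u i‖ ^ 2 := Finset.sum_le_sum fun i _ => hvon.sum_inner_products_le (u i)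
      _ = ∑ i, ∑ l, (M i l) ^ 2 := Finset.sum_congr rfl fun i _ => hun i
  -- put everything together
  have hfrob : frobNorm (B' - A') ^ 2 = ∑ i, ∑ l, ((B' - A') i l) ^ 2 := by
    rw [frobNorm, Real.sq_sqrt (by positivity)]
  have hsum : (m : ℝ) ≤ frobNorm (B' - A') ^ 2 := by
    rw [hfrob]
    calc (m : ℝ) = ∑ j : Fin m, (1 : ℝ) := by simp
      _ = ∑ j, ‖(Matrix.toEuclideanLin (B' - A')) (v j)‖ ^ 2 :=
          (Finset.sum_congr rfl fun j _ => (hnorm j).symm)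
      _ ≤ ∑ i, ∑ l, ((B' - A') i l) ^ 2 := hbessel
  have : (A'.rank : ℝ) - (B'.rank : ℝ) ≤ (m : ℝ) := by
    have : A'.rank ≤ m + B'.rank := by omega
    have := Nat.cast_le (α := ℝ) |>.mpr this
    push_cast at this ⊢
    linarith
  linarith


end ListDecCov
end
end
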